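/- Let n ≥ 1 and let α₁ > α₂ > ⋯ > αₙ > 0 be real numbers. Set β_k = α_k − α_{k+1} for k ∈ [n], with the convention α_{n+1} = 0, so that all β_k > 0. For k ∈ [n] let Q(k,n) = {x ∈ [0,1]ⁿ : Σ_{i=1}^{n} x_i ≤ k}. Then the SIM-body decomposes as the Minkowski sum Λ(α₁,…,αₙ) = β₁·Q(1,n) + β₂·Q(2,n) + ⋯ + βₙ·Q(n,n), where βᵢ·Q(i,n) denotes the dilate {βᵢ x : x ∈ Q(i,n)} and + denotes Minkowski addition of subsets of ℝⁿ. -/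

import Mathlib

open Finset Pointwise

/-- The SIM-body `Λ(α₁,…,αₙ)` for parameters `α : Fin n → ℝ` (0-indexed). -/
def SIM {n : ℕ} (α : Fin n → ℝ) : Set (Fin n → ℝ) :=
  {x | (∀ i, 0 ≤ x i) ∧ ∀ I : Finset (Fin n), I.Nonempty →
    ∑ i ∈ I, x i ≤ ∑ j ∈ Finset.univ.filter (fun j : Fin n => (j : ℕ) < I.card), α j}

/-- The polytope `Q(k,n) = {x ∈ [0,1]ⁿ : Σᵢ xᵢ ≤ k}`. -/
def Qpoly (n k : ℕ) : Set (Fin n → ℝ) :=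
  {x | (∀ i, x i ∈ Set.Icc (0 : ℝ) 1) ∧ ∑ i, x i ≤ (k : ℝ)}

noncomputable def Bseq (n : ℕ) (α : Fin n → ℝ) : ℕ → ℝ :=
  fun j => if h : j < n then α ⟨j, h⟩ else 0

lemma abel_aux (v d : ℕ → ℝ) (hv : Antitone v) :
    ∀ N, (∀ m, m ≤ N → ∑ l ∈ Finset.range m, d l ≤ 0) →
      ∑ l ∈ Finset.range N, v l * d l ≤ v N * ∑ l ∈ Finset.range N, d l := by
  intro N
  induction N with
  | zero => simp
  | succ N ih =>
    intro h
    rw [Finset.sum_range_succ, Finset.sum_range_succ]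
    have h1 := ih (fun m hm => h m (hm.trans (Nat.le_succ N)))
    have h2 : v N * ∑ l ∈ Finset.range N, d l + v N * d N
        = v N * (∑ l ∈ Finset.range N, d l + d N) := by ring
    have h3 : v N * (∑ l ∈ Finset.range N, d l + d N) ≤
        v (N+1) * (∑ l ∈ Finset.range N, d l + d N) := by
      apply mul_le_mul_of_nonpos_right (hv (Nat.le_succ N))
      have := h (N+1) le_rfl
      rwa [Finset.sum_range_succ] at this
    nlinarith [h1]

lemma fin_filter_sum (n : ℕ) (P : ℕ → Prop) [DecidablePred P] (g : ℕ → ℝ) :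
    ∑ j ∈ Finset.univ.filter (fun j : Fin n => P (j : ℕ)), g (j : ℕ)
      = ∑ k ∈ (Finset.range n).filter P, g k := by
  rw [Finset.sum_filter, Finset.sum_filter]
  rw [← Fin.sum_univ_eq_sum_range (fun k => if P k then g k else 0) n]

lemma tele (n : ℕ) (α : Fin n → ℝ) (l : ℕ) (hl : l < n) :
    ∑ j ∈ Finset.univ.filter (fun j : Fin n => l ≤ (j : ℕ)),
      (Bseq n α (j : ℕ) - Bseq n α ((j : ℕ) + 1)) = Bseq n α l := by
  have := fin_filter_sum n (fun k => l ≤ k) (fun k => Bseq n α k - Bseq n α (k+1))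
  rw [this]
  have hIco : (Finset.range n).filter (fun k => l ≤ k) = Finset.Ico l n := by
    ext k; simp [Finset.mem_Ico]; omega
  rw [hIco, Finset.sum_Ico_eq_sum_range]
  have : ∑ k ∈ Finset.range (n - l), (Bseq n α (l + k) - Bseq n α (l + k + 1))
      = Bseq n α l - Bseq n α (l + (n - l)) := by
    have := Finset.sum_range_sub' (fun k => Bseq n α (l + k)) (n - l)
    simpa [add_assoc] using this
  rw [this]
  have : l + (n - l) = n := by omega
  rw [this]
  simp [Bseq]

lemma count_min (m jv : ℕ) :
    ∑ k ∈ Finset.range m, (if k ≤ jv then (1:ℝ) else 0) = (min m (jv+1) : ℕ) := by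
  rw [Finset.sum_boole]
  congr 1
  have : (Finset.range m).filter (fun k => k ≤ jv) = Finset.range (min m (jv+1)) := by
    ext k; simp <;> omega
  rw [this, Finset.card_range]

lemma qpoly_convex (n k : ℕ) : Convex ℝ (Qpoly n k) := by
  intro x hx y hy a b ha hb hab
  refine ⟨fun i => ?_, ?_⟩
  · have h1 := hx.1 i; have h2 := hy.1 i
    have := (convex_Icc (0:ℝ) 1) h1 h2 ha hb hab
    simpa using this
  · have : ∑ i, (a • x + b • y) i = a * ∑ i, x i + b * ∑ i, y i := by
      simp [Finset.mul_sum, Finset.sum_add_distrib]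
    rw [this]
    calc a * ∑ i, x i + b * ∑ i, y i ≤ a * k + b * k := by
          gcongr
          · exact hx.2
          · exact hy.2
      _ = k := by rw [← add_mul, hab, one_mul]

lemma qpoly_isClosed (n k : ℕ) : IsClosed (Qpoly n k) := by
  have h1 : IsClosed {x : Fin n → ℝ | ∀ i, x i ∈ Set.Icc (0:ℝ) 1} := by
    have : {x : Fin n → ℝ | ∀ i, x i ∈ Set.Icc (0:ℝ) 1}
        = ⋂ i, (fun x : Fin n → ℝ => x i) ⁻¹' Set.Icc (0:ℝ) 1 := by
      ext x; simp
    rw [this]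
    exact isClosed_iInter fun i => isClosed_Icc.preimage (continuous_apply i)
  have h2 : IsClosed {x : Fin n → ℝ | ∑ i, x i ≤ (k:ℝ)} := by
    have : Continuous fun x : Fin n → ℝ => ∑ i, x i :=
      continuous_finset_sum _ fun i _ => continuous_apply i
    exact isClosed_le this continuous_const
  exact h1.inter h2

lemma qpoly_isCompact (n k : ℕ) : IsCompact (Qpoly n k) := by
  have hsub : Qpoly n k ⊆ Set.pi Set.univ (fun _ : Fin n => Set.Icc (0:ℝ) 1) := by
    intro x hx i _; exact hx.1 i
  exact (isCompact_univ_pi fun _ => isCompact_Icc).of_isClosed_subset (qpoly_isClosed n k) hsub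

lemma qpoly_zero_mem (n k : ℕ) : (0 : Fin n → ℝ) ∈ Qpoly n k := by
  exact ⟨fun i => by simp, by simp⟩

-- sum of sets: convex and compact
lemma sum_smul_qpoly_convex (n : ℕ) (β : Fin n → ℝ) :
    Convex ℝ (∑ j : Fin n, β j • Qpoly n ((j:ℕ)+1)) := by
  classical
  induction (Finset.univ : Finset (Fin n)) using Finset.cons_induction with
  | empty =>
    rw [Finset.sum_empty]
    exact convex_singleton (0 : Fin n → ℝ)
  | cons a s ha ih =>
    rw [Finset.sum_cons]
    exact ((qpoly_convex n _).smul _).add ih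

lemma sum_smul_qpoly_isClosed (n : ℕ) (β : Fin n → ℝ) :
    IsClosed (∑ j : Fin n, β j • Qpoly n ((j:ℕ)+1)) := by
  classical
  have : IsCompact (∑ j : Fin n, β j • Qpoly n ((j:ℕ)+1)) := by
    induction (Finset.univ : Finset (Fin n)) using Finset.cons_induction with
    | empty =>
      rw [Finset.sum_empty]
      exact (isCompact_singleton : IsCompact ({0} : Set (Fin n → ℝ)))
    | cons a s ha ih =>
      rw [Finset.sum_cons]
      exact ((qpoly_isCompact n _).smul (β a)).add ih
  exact this.isClosed

lemma beta_eq {n : ℕ} (α : Fin n → ℝ) (j : Fin n) :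
    α j - (if h : (j : ℕ) + 1 < n then α ⟨(j : ℕ) + 1, h⟩ else 0)
      = Bseq n α (j : ℕ) - Bseq n α ((j : ℕ) + 1) := by
  simp [Bseq]

lemma beta_pos {n : ℕ} (α : Fin n → ℝ) (hdec : ∀ i j : Fin n, i < j → α j < α i)
    (hpos : ∀ i, 0 < α i) (j : Fin n) :
    0 < α j - (if h : (j : ℕ) + 1 < n then α ⟨(j : ℕ) + 1, h⟩ else 0) := by
  by_cases h : (j : ℕ) + 1 < n
  · rw [dif_pos h]
    have : j < (⟨(j:ℕ)+1, h⟩ : Fin n) := by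
      simp [Fin.lt_def]
    linarith [hdec j ⟨(j:ℕ)+1, h⟩ this]
  · rw [dif_neg h]
    simpa using hpos j

theorem easy_dir (n : ℕ) (hn : 1 ≤ n) (α : Fin n → ℝ)
    (hdec : ∀ i j : Fin n, i < j → α j < α i) (hpos : ∀ i, 0 < α i) :
    (∑ j : Fin n,
      (α j - (if h : (j : ℕ) + 1 < n then α ⟨(j : ℕ) + 1, h⟩ else 0)) •
        Qpoly n ((j : ℕ) + 1)) ⊆ SIM α := by
  classical
  set βe : Fin n → ℝ := fun j =>
    α j - (if h : (j : ℕ) + 1 < n then α ⟨(j : ℕ) + 1, h⟩ else 0) with hβe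
  intro x hx
  rw [Set.mem_fintype_sum] at hx
  obtain ⟨g, hg, hsum⟩ := hx
  choose q hq hqe using fun j => Set.mem_smul_set.mp (hg j)
  have hβpos : ∀ j, 0 < βe j := fun j => beta_pos α hdec hpos j
  have hgapp : ∀ j i, g j i = βe j * q j i := by
    intro j i; rw [← hqe j]; rfl
  have hxapp : ∀ i, x i = ∑ j : Fin n, βe j * q j i := by
    intro i
    rw [← hsum, Finset.sum_apply]
    exact Finset.sum_congr rfl fun j _ => hgapp j i
  constructor
  · intro i
    rw [hxapp i]
    exact Finset.sum_nonneg fun j _ => mul_nonneg (hβpos j).le ((hq j).1 i).1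
  · intro I hI
    set m := I.card with hm
    have hm1 : 1 ≤ m := Finset.card_pos.mpr hI
    have hmn : m ≤ n := by
      simpa using Finset.card_le_card (Finset.subset_univ I)
    -- sum over I
    have step1 : ∑ i ∈ I, x i = ∑ j : Fin n, βe j * ∑ i ∈ I, q j i := by
      simp_rw [hxapp, Finset.mul_sum]
      rw [Finset.sum_comm]
    have step2 : ∀ j : Fin n, ∑ i ∈ I, q j i ≤ ((min m ((j:ℕ)+1) : ℕ) : ℝ) := by
      intro j
      have h1 : ∑ i ∈ I, q j i ≤ (m : ℝ) := by
        calc ∑ i ∈ I, q j i ≤ ∑ i ∈ I, 1 :=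
              Finset.sum_le_sum fun i _ => ((hq j).1 i).2
          _ = (m : ℝ) := by simp [hm]
      have h2 : ∑ i ∈ I, q j i ≤ (((j:ℕ)+1 : ℕ) : ℝ) := by
        calc ∑ i ∈ I, q j i ≤ ∑ i : Fin n, q j i :=
              Finset.sum_le_sum_of_subset_of_nonneg (Finset.subset_univ I)
                (fun i _ _ => ((hq j).1 i).1)
          _ ≤ (((j:ℕ)+1 : ℕ) : ℝ) := by simpa using (hq j).2
      rw [Nat.cast_min]
      exact le_min h1 h2
    have step3 : ∑ i ∈ I, x i ≤ ∑ j : Fin n, βe j * ((min m ((j:ℕ)+1) : ℕ) : ℝ) := by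
      rw [step1]
      exact Finset.sum_le_sum fun j _ =>
        mul_le_mul_of_nonneg_left (step2 j) (hβpos j).le
    have step4 : ∑ j : Fin n, βe j * ((min m ((j:ℕ)+1) : ℕ) : ℝ)
        = ∑ k ∈ Finset.range m, Bseq n α k := by
      have : ∀ j : Fin n, βe j * ((min m ((j:ℕ)+1) : ℕ) : ℝ)
          = ∑ k ∈ Finset.range m,
              (if k ≤ (j:ℕ) then Bseq n α (j:ℕ) - Bseq n α ((j:ℕ)+1) else 0) := by
        intro j
        show (α j - (if h : (j : ℕ) + 1 < n then α ⟨(j : ℕ) + 1, h⟩ else 0))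
            * ((min m ((j:ℕ)+1) : ℕ) : ℝ) = _
        rw [beta_eq α j, ← count_min m (j:ℕ), Finset.mul_sum]
        exact Finset.sum_congr rfl fun k _ => by split <;> simp
      simp_rw [this]
      rw [Finset.sum_comm]
      refine Finset.sum_congr rfl fun k hk => ?_
      rw [Finset.mem_range] at hk
      rw [← Finset.sum_filter]
      exact tele n α k (lt_of_lt_of_le hk hmn)
    have step5 : ∑ j ∈ Finset.univ.filter (fun j : Fin n => (j : ℕ) < m), α j
        = ∑ k ∈ Finset.range m, Bseq n α k := by
      have h1 : ∀ j : Fin n, α j = Bseq n α (j : ℕ) := by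
        intro j; simp [Bseq]
      calc ∑ j ∈ Finset.univ.filter (fun j : Fin n => (j : ℕ) < m), α j
          = ∑ j ∈ Finset.univ.filter (fun j : Fin n => (j : ℕ) < m), Bseq n α (j:ℕ) :=
            Finset.sum_congr rfl fun j _ => h1 j
        _ = ∑ k ∈ (Finset.range n).filter (fun k => k < m), Bseq n α k :=
            fin_filter_sum n (fun k => k < m) (Bseq n α)
        _ = ∑ k ∈ Finset.range m, Bseq n α k := by
            congr 1
            ext k; simp; omega
    rw [step5, ← step4]
    exact step3

lemma filter_alpha_sum (n : ℕ) (α : Fin n → ℝ) (m : ℕ) (hmn : m ≤ n) :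
    ∑ j ∈ Finset.univ.filter (fun j : Fin n => (j : ℕ) < m), α j
      = ∑ k ∈ Finset.range m, Bseq n α k := by
  calc ∑ j ∈ Finset.univ.filter (fun j : Fin n => (j : ℕ) < m), α j
      = ∑ j ∈ Finset.univ.filter (fun j : Fin n => (j : ℕ) < m), Bseq n α (j:ℕ) :=
        Finset.sum_congr rfl fun j _ => by simp [Bseq]
    _ = ∑ k ∈ (Finset.range n).filter (fun k => k < m), Bseq n α k :=
        fin_filter_sum n (fun k => k < m) (Bseq n α)
    _ = ∑ k ∈ Finset.range m, Bseq n α k := by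
        congr 1
        ext k; simp; omega

theorem hard_dir (n : ℕ) (hn : 1 ≤ n) (α : Fin n → ℝ)
    (hdec : ∀ i j : Fin n, i < j → α j < α i) (hpos : ∀ i, 0 < α i) :
    SIM α ⊆ ∑ j : Fin n,
      (α j - (if h : (j : ℕ) + 1 < n then α ⟨(j : ℕ) + 1, h⟩ else 0)) •
        Qpoly n ((j : ℕ) + 1) := by
  classical
  set βe : Fin n → ℝ := fun j =>
    α j - (if h : (j : ℕ) + 1 < n then α ⟨(j : ℕ) + 1, h⟩ else 0) with hβe
  intro x hx
  by_contra hxS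
  obtain ⟨f, u, hfu, hux⟩ := geometric_hahn_banach_closed_point
    (sum_smul_qpoly_convex n βe) (sum_smul_qpoly_isClosed n βe) hxS
  set w : Fin n → ℝ := fun i => f (fun j => if i = j then (1:ℝ) else 0) with hw
  have hf : ∀ y : Fin n → ℝ, f y = ∑ i, y i * w i := by
    intro y
    conv_lhs => rw [pi_eq_sum_univ y, map_sum]
    exact Finset.sum_congr rfl fun i _ => by rw [map_smul]; rfl
  set σ : Equiv.Perm (Fin n) := Tuple.sort (fun i => -(w i)) with hσ
  have hmono : Monotone ((fun i => -(w i)) ∘ σ) := Tuple.monotone_sort _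
  have hwanti : ∀ a b : Fin n, a ≤ b → w (σ b) ≤ w (σ a) := by
    intro a b hab
    have := hmono hab
    simpa using this
  set B : ℕ → ℝ := Bseq n α with hB
  set v : ℕ → ℝ := fun l => if h : l < n then max (w (σ ⟨l,h⟩)) 0 else 0 with hv
  set u' : ℕ → ℝ := fun l => if h : l < n then x (σ ⟨l,h⟩) else 0 with hu'
  have hvnonneg : ∀ l, 0 ≤ v l := by
    intro l; rw [hv]; dsimp only; split
    · exact le_max_right _ _
    · exact le_rfl
  have hvanti : Antitone v := by
    intro a b hab
    rcases lt_or_ge b n with hbn | hbn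
    · have han : a < n := lt_of_le_of_lt hab hbn
      rw [hv]; dsimp only
      rw [dif_pos hbn, dif_pos han]
      exact max_le_max (hwanti ⟨a, han⟩ ⟨b, hbn⟩ hab) le_rfl
    · calc v b = 0 := by rw [hv]; dsimp only; rw [dif_neg (not_lt.mpr hbn)]
        _ ≤ v a := hvnonneg a
  -- prefix sums
  have hpre : ∀ m, m ≤ n → ∑ l ∈ Finset.range m, u' l ≤ ∑ l ∈ Finset.range m, B l := by
    intro m hmn
    rcases Nat.eq_zero_or_pos m with rfl | hm1
    · simp
    · set I : Finset (Fin n) :=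
        Finset.image (fun l : Fin m => σ (Fin.castLE hmn l)) Finset.univ with hI
      have hinj : Function.Injective (fun l : Fin m => σ (Fin.castLE hmn l)) := by
        intro a b hab
        have := σ.injective hab
        simpa [Fin.castLE_inj] using this
      have hcard : I.card = m := by
        rw [hI, Finset.card_image_of_injective _ hinj, Finset.card_univ, Fintype.card_fin]
      have hne : I.Nonempty :=
        ⟨σ (Fin.castLE hmn ⟨0, hm1⟩), Finset.mem_image_of_mem _ (Finset.mem_univ _)⟩
      have hbound := hx.2 I hne
      rw [hcard] at hbound
      have hL : ∑ i ∈ I, x i = ∑ l ∈ Finset.range m, u' l := by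
        rw [hI, Finset.sum_image (fun a _ b _ h => hinj h)]
        rw [← Fin.sum_univ_eq_sum_range u' m]
        refine Finset.sum_congr rfl fun l _ => ?_
        rw [hu']; dsimp only
        rw [dif_pos (lt_of_lt_of_le l.isLt hmn)]
        rfl
      rw [← hL]
      calc ∑ i ∈ I, x i ≤ _ := hbound
        _ = ∑ l ∈ Finset.range m, B l := filter_alpha_sum n α m hmn
  -- the competitor point z
  set qq : Fin n → Fin n → ℝ := fun j i =>
    if ((σ.symm i : ℕ) ≤ (j : ℕ) ∧ 0 < w i) then 1 else 0 with hqq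
  have hqqmem : ∀ j : Fin n, qq j ∈ Qpoly n ((j:ℕ)+1) := by
    intro j
    constructor
    · intro i; rw [hqq]; dsimp only; split
      · exact ⟨zero_le_one, le_rfl⟩
      · exact ⟨le_rfl, zero_le_one⟩
    · calc ∑ i, qq j i ≤ ∑ i, (if ((σ.symm i : ℕ) ≤ (j : ℕ)) then (1:ℝ) else 0) := by
            refine Finset.sum_le_sum fun i _ => ?_
            rw [hqq]; dsimp only
            split_ifs with h1 h2 h2
            · exact le_rfl
            · exact absurd h1.1 h2
            · exact zero_le_one
            · exact le_rfl
        _ = ∑ l : Fin n, (if ((l : ℕ) ≤ (j : ℕ)) then (1:ℝ) else 0) := by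
            rw [← Equiv.sum_comp σ.symm
              (fun l : Fin n => if ((l : ℕ) ≤ (j : ℕ)) then (1:ℝ) else 0)]
        _ = ∑ l ∈ Finset.range n, (if (l ≤ (j : ℕ)) then (1:ℝ) else 0) :=
            Fin.sum_univ_eq_sum_range (fun l => if l ≤ (j : ℕ) then (1:ℝ) else 0) n
        _ ≤ ((j:ℕ)+1 : ℕ) := by
            rw [Finset.sum_boole]
            have hsub : (Finset.range n).filter (fun l => l ≤ (j:ℕ))
                ⊆ Finset.range ((j:ℕ)+1) := by
              intro l hl
              simp only [Finset.mem_filter, Finset.mem_range] at hl ⊢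
              omega
            have := Finset.card_le_card hsub
            rw [Finset.card_range] at this
            exact_mod_cast Nat.cast_le.mpr this
        _ = (((j:ℕ)+1 : ℕ) : ℝ) := rfl
  set z : Fin n → ℝ := ∑ j : Fin n, βe j • qq j with hz
  have hzS : z ∈ ∑ j : Fin n, βe j • Qpoly n ((j:ℕ)+1) := by
    rw [hz]
    exact Set.finset_sum_mem_finset_sum _ _ _
      (fun j _ => Set.smul_mem_smul_set (hqqmem j))
  -- main chain
  have score : ∀ j : Fin n, f (qq j)
      = ∑ l ∈ Finset.range n, (if l ≤ (j:ℕ) then v l else 0) := by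
    intro j
    rw [hf]
    calc ∑ i, qq j i * w i
        = ∑ l : Fin n, (if ((l:ℕ) ≤ (j:ℕ)) then max (w (σ l)) 0 else 0) := by
          rw [← Equiv.sum_comp σ (fun i => qq j i * w i)]
          refine Finset.sum_congr rfl fun l _ => ?_
          rw [hqq]; dsimp only
          rw [Equiv.symm_apply_apply]
          by_cases hl : (l : ℕ) ≤ (j : ℕ)
          · rw [if_pos hl]
            by_cases hw0 : 0 < w (σ l)
            · rw [if_pos ⟨hl, hw0⟩, one_mul, max_eq_left hw0.le]
            · rw [if_neg (fun hc => hw0 hc.2), zero_mul,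
                max_eq_right (not_lt.mp hw0)]
          · rw [if_neg hl, if_neg (fun hc => hl hc.1), zero_mul]
      _ = ∑ l ∈ Finset.range n, (if l ≤ (j:ℕ) then v l else 0) := by
          rw [← Fin.sum_univ_eq_sum_range (fun l => if l ≤ (j:ℕ) then v l else 0) n]
          refine Finset.sum_congr rfl fun l _ => ?_
          rw [hv]; dsimp only
          rw [dif_pos l.isLt]
  have hfz : f z = ∑ l ∈ Finset.range n, v l * B l := by
    rw [hz, map_sum]
    have : ∀ j : Fin n, f (βe j • qq j) = βe j * f (qq j) := fun j => by
      rw [map_smul]; rfl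
    rw [Finset.sum_congr rfl fun j _ => this j]
    calc ∑ j : Fin n, βe j * f (qq j)
        = ∑ j : Fin n, ∑ l ∈ Finset.range n,
            (if l ≤ (j:ℕ) then βe j * v l else 0) := by
          refine Finset.sum_congr rfl fun j _ => ?_
          rw [score j, Finset.mul_sum]
          exact Finset.sum_congr rfl fun l _ => by split <;> simp
      _ = ∑ l ∈ Finset.range n, ∑ j : Fin n,
            (if l ≤ (j:ℕ) then βe j * v l else 0) := Finset.sum_comm
      _ = ∑ l ∈ Finset.range n, v l * B l := by
          refine Finset.sum_congr rfl fun l hl => ?_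
          rw [Finset.mem_range] at hl
          rw [← Finset.sum_filter, ← Finset.sum_mul]
          rw [Finset.sum_congr rfl fun j (_ : j ∈ Finset.univ.filter
            (fun j : Fin n => l ≤ (j:ℕ))) => beta_eq α j]
          rw [tele n α l hl, mul_comm]
  have hchain : f x ≤ f z := by
    rw [hf x, hfz]
    have c1 : ∑ i, x i * w i ≤ ∑ i, x i * max (w i) 0 :=
      Finset.sum_le_sum fun i _ =>
        mul_le_mul_of_nonneg_left (le_max_left _ _) (hx.1 i)
    have c2 : ∑ i, x i * max (w i) 0 = ∑ l ∈ Finset.range n, v l * u' l := by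
      rw [← Fin.sum_univ_eq_sum_range (fun l => v l * u' l) n]
      rw [← Equiv.sum_comp σ (fun i => x i * max (w i) 0)]
      refine Finset.sum_congr rfl fun l _ => ?_
      rw [hv, hu']; dsimp only
      rw [dif_pos l.isLt, dif_pos l.isLt]
      simp [mul_comm]
    have c3 : ∑ l ∈ Finset.range n, v l * u' l ≤ ∑ l ∈ Finset.range n, v l * B l := by
      have habel := abel_aux v (fun l => u' l - B l) hvanti n
        (fun m hm => by
          rw [Finset.sum_sub_distrib]
          linarith [hpre m hm])
      have hvn : v n = 0 := by rw [hv]; dsimp only; rw [dif_neg (lt_irrefl n)]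
      rw [hvn, zero_mul] at habel
      have hexp : ∑ l ∈ Finset.range n, v l * (u' l - B l)
          = ∑ l ∈ Finset.range n, v l * u' l - ∑ l ∈ Finset.range n, v l * B l := by
        rw [← Finset.sum_sub_distrib]
        exact Finset.sum_congr rfl fun l _ => by ring
      rw [hexp] at habel
      linarith
    linarith
  have := hfu z hzS
  linarith

/-- for strictly decreasing positive parameters, the SIM-body decomposes as the
Minkowski sum `Λ(α₁,…,αₙ) = β₁·Q(1,n) + ⋯ + βₙ·Q(n,n)`, where `β_k = α_k − α_{k+1}` (with
`α_{n+1} = 0`). -/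
theorem sim_body_minkowski_decomposition (n : ℕ) (hn : 1 ≤ n) (α : Fin n → ℝ)
    (hdec : ∀ i j : Fin n, i < j → α j < α i) (hpos : ∀ i, 0 < α i) :
    SIM α = ∑ j : Fin n,
      (α j - (if h : (j : ℕ) + 1 < n then α ⟨(j : ℕ) + 1, h⟩ else 0)) •
        Qpoly n ((j : ℕ) + 1) := by
  exact subset_antisymm (hard_dir n hn α hdec hpos) (easy_dir n hn α hdec hpos)
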